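/- Let p be a prime, let G be a Camina group that is a finite p-group, and let z ∈ G with z ∉ G' (the commutator subgroup). Then for all x, y ∈ G: y·x⁻¹ ∈ z^G if and only if y^G ⊆ x^G · z^G (where x^G · z^G = {ab : a ∈ x^G, b ∈ z^G}). -/

import Mathlib

open scoped Classical Pointwise

/-- The conjugacy class of `x` in `G`. -/
def conjClass {G : Type*} [Group G] (x : G) : Set G := {y | ∃ g : G, g * x * g⁻¹ = y}

/-- The adjacency matrix of a subset `C` of `G`. -/
noncomputable def adjMat (G : Type*) [Group G] (C : Set G) : Matrix G G ℂ :=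
  Matrix.of fun x y => if y * x⁻¹ ∈ C then (1 : ℂ) else 0

/-- The dual idempotent of a subset `C` of `G` (base point the identity). -/
noncomputable def dualIdem (G : Type*) [Group G] (C : Set G) : Matrix G G ℂ :=
  Matrix.of fun x y => if x = y ∧ y ∈ C then (1 : ℂ) else 0

/-- The Terwilliger algebra of the group association scheme of `G`, with base point `e`. -/
noncomputable def TerwAlg (G : Type*) [Group G] [Fintype G] [DecidableEq G] : Subalgebra ℂ (Matrix G G ℂ) :=
  Algebra.adjoin ℂ
    ((Set.range fun x : G => adjMat G (conjClass x)) ∪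
     (Set.range fun x : G => dualIdem G (conjClass x)))

/-- A Camina group: a nonabelian group in which every conjugacy class outside the
commutator subgroup is a coset of the commutator subgroup. -/
def IsCamina (G : Type*) [Group G] : Prop :=
  (¬ ∀ a b : G, a * b = b * a) ∧
  ∀ x : G, x ∉ commutator G → conjClass x = x • (commutator G : Set G)

/-- The action of the unit group of a field on (the multiplicative version of) its
additive group, by multiplication. -/
noncomputable def frobAct (F : Type*) [Field F] : Fˣ →* MulAut (Multiplicative F) where
  toFun u := AddEquiv.toMultiplicative (DistribMulAction.toAddAut Fˣ F u)
  map_one' := by ext x; simp only [map_one]; rfl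
  map_mul' u v := by ext x; simp only [map_mul]; rfl


/-- The Frobenius group `F ⋊ Fˣ` for `F` the field with `p ^ r` elements. -/
abbrev FrobGrp (p r : ℕ) [Fact p.Prime] : Type :=
  Multiplicative (GaloisField p r) ⋊[frobAct (GaloisField p r)] (GaloisField p r)ˣ

lemma comm_aux {H : Type*} [CommGroup H] (g h x z : H) :
    z⁻¹ * ((g*x*g⁻¹) * (h*z*h⁻¹) * x⁻¹) = 1 := by
  simp [mul_comm, mul_left_comm, mul_assoc]

lemma mem_comm_aux {G : Type*} [Group G] (g h x z : G) :
    z⁻¹ * ((g*x*g⁻¹) * (h*z*h⁻¹) * x⁻¹) ∈ commutator G := by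
  have : Abelianization.of (z⁻¹ * ((g*x*g⁻¹) * (h*z*h⁻¹) * x⁻¹)) = 1 := by
    simp only [map_mul, map_inv]
    exact comm_aux _ _ _ _
  exact (QuotientGroup.eq_one_iff _).mp this

/-- Lemma 5.5: in a Camina `p`-group, for a class outside the commutator subgroup,
`y·x⁻¹ ∈ z^G` iff `y^G ⊆ x^G · z^G`. -/
theorem stmt10 (p : ℕ) (hp : p.Prime) {G : Type*} [Group G] [Finite G]
    (hpg : IsPGroup p G) (hcam : IsCamina G) (z : G) (hz : z ∉ commutator G) :
    ∀ x y : G, y * x⁻¹ ∈ conjClass z ↔ conjClass y ⊆ conjClass x * conjClass z := by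
  obtain ⟨-, hcam2⟩ := hcam
  have hzc := hcam2 z hz
  intro x y
  constructor
  · rintro ⟨h, hh⟩
    rintro w ⟨g, rfl⟩
    refine ⟨g * x * g⁻¹, ⟨g, rfl⟩, (g*x⁻¹*h) * z * (g*x⁻¹*h)⁻¹, ⟨g*x⁻¹*h, rfl⟩, ?_⟩
    have hz' : z = h⁻¹ * (y * x⁻¹) * h := by rw [← hh]; group
    rw [hz']; group
  · intro hsub
    have hy : y ∈ conjClass y := ⟨1, by group⟩
    obtain ⟨a, ⟨g, rfl⟩, b, ⟨h, rfl⟩, hab⟩ := hsub hy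
    have hab' : g * x * g⁻¹ * (h * z * h⁻¹) = y := hab
    rw [hzc, Set.mem_smul_set_iff_inv_smul_mem]
    have hmem := mem_comm_aux g h x z
    rw [hab'] at hmem
    simpa using hmem
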